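/- Fix d ≥ 3 and N ≥ 1, and let the learner be any deterministic function L that maps a history (a finite list of pairs, each consisting of an additional constraint (p, q) ∈ ℝ^d × ℝ and the revealed optimal solution x ∈ ℝ^d of that day) together with the current day's constraint (p', q') ∈ ℝ^d × ℝ to a prediction in ℝ^d. Then there is an absolute constant γ > 0 such that there exist m ≥ 1, a matrix A ∈ ℝ^{m×d} and vector b ∈ ℝ^m defining a bounded polytope P = {x : Ax ≤ b} contained in the unit ℓ∞-ball whose vertices all have coordinates that are integer multiples of 2^{−N}, a known objective c ∈ ℝ^d, and a finite sequence of constraints (p^1, q^1), …, (p^T, q^T) such that: for each t ≤ T the maximizer x^t of c·x over P ∩ {x : p^t·x ≤ q^t} is unique, and the number of days t ≤ T on which L applied to the history ((p^1,q^1),x^1), …, ((p^{t−1},q^{t−1}),x^{t−1}) and the current constraint (p^t,q^t) fails to output x^t is at least γ·N. -/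

import Mathlib

open Matrix

namespace Adv

/-! Scalar / combinatorial layer -/

def TT (N : ℕ) : ℕ := max 1 (N / 2)

noncomputable def hh (N : ℕ) : ℝ := ((2:ℝ)^N)⁻¹

lemma hh_pos (N : ℕ) : 0 < hh N := by
  simp only [hh]; positivity

def sF (N : ℕ) (β : ℕ → Bool) (k : ℕ) : ℕ :=
  4 ^ (TT N - 1 - k) * (if β k then 2 else 1)

def GF (N : ℕ) (β : ℕ → Bool) (n : ℕ) : ℕ :=
  ∑ k ∈ Finset.range n, sF N β k

lemma TT_pos (N : ℕ) : 1 ≤ TT N := le_max_left _ _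

lemma sF_pos (N : ℕ) (β : ℕ → Bool) (k : ℕ) : 1 ≤ sF N β k := by
  unfold sF
  have : 1 ≤ 4 ^ (TT N - 1 - k) := Nat.one_le_two_pow.trans (Nat.pow_le_pow_left (by norm_num) _)
  cases β k <;> simp <;> omega

lemma sF_le (N : ℕ) (β : ℕ → Bool) (k : ℕ) : sF N β k ≤ 2 * 4 ^ (TT N - 1 - k) := by
  unfold sF; cases β k <;> simp <;> omega

lemma sF_ge (N : ℕ) (β : ℕ → Bool) (k : ℕ) : 4 ^ (TT N - 1 - k) ≤ sF N β k := by
  unfold sF; cases β k <;> simp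

lemma sF_strict_anti (N : ℕ) (β : ℕ → Bool) {j k : ℕ} (hjk : j < k) (hk : k < TT N) :
    sF N β k < sF N β j := by
  have h1 : sF N β k ≤ 2 * 4 ^ (TT N - 1 - k) := sF_le N β k
  have h2 : 4 ^ (TT N - 1 - j) ≤ sF N β j := sF_ge N β j
  have he : TT N - 1 - j = (TT N - 1 - k) + (k - j) := by omega
  have : 4 ^ (TT N - 1 - k) * 4 ≤ 4 ^ (TT N - 1 - j) := by
    rw [he, pow_add]
    have : (4:ℕ) ≤ 4 ^ (k - j) := by
      calc (4:ℕ) = 4 ^ 1 := by norm_num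
      _ ≤ 4 ^ (k - j) := Nat.pow_le_pow_right (by norm_num) (by omega)
    nlinarith
  have hb : 1 ≤ 4 ^ (TT N - 1 - k) := Nat.one_le_two_pow.trans (Nat.pow_le_pow_left (by norm_num) _)
  omega

lemma sF_anti (N : ℕ) (β : ℕ → Bool) {j k : ℕ} (hjk : j ≤ k) (hk : k < TT N) :
    sF N β k ≤ sF N β j := by
  rcases eq_or_lt_of_le hjk with rfl | h
  · exact le_rfl
  · exact (sF_strict_anti N β h hk).le

lemma GF_mono (N : ℕ) (β : ℕ → Bool) : Monotone (GF N β) := by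
  intro a b hab
  exact Finset.sum_le_sum_of_subset (Finset.range_subset_range.2 hab)

/-- upper bound on partial sums: `G c ≤ G a + (c-a) * s a` for `a ≤ c ≤ T`. -/
lemma GF_upper (N : ℕ) (β : ℕ → Bool) {a c : ℕ} (hac : a ≤ c) (hc : c ≤ TT N) :
    GF N β c ≤ GF N β a + (c - a) * sF N β a := by
  have hsplit : GF N β c = GF N β a + ∑ k ∈ Finset.Ico a c, sF N β k := by
    unfold GF
    rw [← Finset.sum_range_add_sum_Ico _ hac]
  rw [hsplit]
  have : ∑ k ∈ Finset.Ico a c, sF N β k ≤ ∑ _k ∈ Finset.Ico a c, sF N β a := by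
    apply Finset.sum_le_sum
    intro k hk
    rw [Finset.mem_Ico] at hk
    exact sF_anti N β hk.1 (lt_of_lt_of_le hk.2 hc)
  simpa [Nat.card_Ico] using this.trans_eq (by simp [Nat.card_Ico, mul_comm])

/-- lower bound: `G a + (c-a) * s c ≤ G c` for `a ≤ c < T`. -/
lemma GF_lower (N : ℕ) (β : ℕ → Bool) {a c : ℕ} (hac : a ≤ c) (hc : c < TT N) :
    GF N β a + (c - a) * sF N β c ≤ GF N β c := by
  have hsplit : GF N β c = GF N β a + ∑ k ∈ Finset.Ico a c, sF N β k := by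
    unfold GF
    rw [← Finset.sum_range_add_sum_Ico _ hac]
  rw [hsplit]
  have : ∑ _k ∈ Finset.Ico a c, sF N β c ≤ ∑ k ∈ Finset.Ico a c, sF N β k := by
    apply Finset.sum_le_sum
    intro k hk
    rw [Finset.mem_Ico] at hk
    exact sF_anti N β hk.2.le hc
  have h2 : (c - a) * sF N β c = ∑ _k ∈ Finset.Ico a c, sF N β c := by
    simp [Nat.card_Ico, mul_comm]
  omega

lemma geom_sum_4 (n : ℕ) : 3 * ∑ i ∈ Finset.range n, 4 ^ i = 4 ^ n - 1 := by
  induction n with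
  | zero => simp
  | succ n ih =>
    rw [Finset.sum_range_succ]
    have : 1 ≤ 4 ^ n := Nat.one_le_two_pow.trans (Nat.pow_le_pow_left (by norm_num) _)
    rw [pow_succ]
    omega

lemma GF_total_le (N : ℕ) (hN : 1 ≤ N) (β : ℕ → Bool) : GF N β (TT N) ≤ 2 ^ N := by
  have hsum : GF N β (TT N) ≤ ∑ k ∈ Finset.range (TT N), 2 * 4 ^ (TT N - 1 - k) := by
    apply Finset.sum_le_sum
    intro k _
    exact sF_le N β k
  have hrefl : ∑ k ∈ Finset.range (TT N), (4:ℕ) ^ (TT N - 1 - k)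
      = ∑ i ∈ Finset.range (TT N), 4 ^ i := by
    rw [← Finset.sum_range_reflect]
    apply Finset.sum_congr rfl
    intro i hi
    rw [Finset.mem_range] at hi
    congr 1
    omega
  have h3 : 3 * ∑ i ∈ Finset.range (TT N), (4:ℕ) ^ i = 4 ^ (TT N) - 1 := geom_sum_4 _
  have hsum2 : ∑ k ∈ Finset.range (TT N), 2 * (4:ℕ) ^ (TT N - 1 - k)
      = 2 * ∑ i ∈ Finset.range (TT N), 4 ^ i := by
    rw [← Finset.mul_sum, hrefl]
  rcases eq_or_lt_of_le hN with h1 | h2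
  · -- N = 1, T = 1
    have hT : TT N = 1 := by unfold TT; omega
    have : GF N β (TT N) ≤ 2 * 4 ^ (TT N - 1 - 0) := by
      rw [hT] at hsum ⊢
      simpa using hsum
    rw [hT] at this
    rw [hT]; simpa [← h1] using this
  · -- N ≥ 2, T = N/2, 2T ≤ N
    have hT : 2 * TT N ≤ N := by unfold TT; omega
    have h4T : (4:ℕ) ^ (TT N) ≤ 2 ^ N := by
      calc (4:ℕ) ^ (TT N) = 2 ^ (2 * TT N) := by rw [pow_mul]; norm_num
      _ ≤ 2 ^ N := Nat.pow_le_pow_right (by norm_num) hT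
    have h1 : 1 ≤ (4:ℕ)^(TT N) := Nat.one_le_two_pow.trans (Nat.pow_le_pow_left (by norm_num) _)
    -- 3 * GF ≤ 3 * (2 * sum) = 2 * (4^T - 1) ≤ 2 * 2^N - 2 ≤ 3 * 2^N
    have : 3 * GF N β (TT N) ≤ 2 * (4 ^ (TT N) - 1) := by
      calc 3 * GF N β (TT N) ≤ 3 * (2 * ∑ i ∈ Finset.range (TT N), 4 ^ i) := by
            rw [← hsum2]; omega
      _ = 2 * (3 * ∑ i ∈ Finset.range (TT N), 4 ^ i) := by ring
      _ = 2 * (4 ^ (TT N) - 1) := by rw [h3]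
    have h2N : 1 ≤ 2^N := Nat.one_le_two_pow
    have : 3 * GF N β (TT N) ≤ 3 * 2 ^ N := by omega
    omega

lemma GF_ge_mul (N : ℕ) (β : ℕ → Bool) {k : ℕ} (hk : k < TT N) :
    k * sF N β k ≤ GF N β k := by
  have := GF_lower N β (Nat.zero_le k) hk
  simpa [GF] using this


variable (d N : ℕ)
variable (L : List (((Fin d → ℝ) × ℝ) × (Fin d → ℝ)) → ((Fin d → ℝ) × ℝ) → (Fin d → ℝ))

noncomputable def pvec : Fin d → ℝ := fun i => if (i:ℕ) = 0 then 1 else 0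
noncomputable def qd (t : ℕ) : ℝ := (t+1) * hh N
noncomputable def ansF (β : ℕ → Bool) (t : ℕ) : Fin d → ℝ := fun i =>
  if (i:ℕ) = 0 then (t+1) * hh N else if (i:ℕ) = 1 then (GF N β (t+1) : ℝ) * hh N else 0
noncomputable def ansLow (β : ℕ → Bool) (t : ℕ) : Fin d → ℝ := fun i =>
  if (i:ℕ) = 0 then (t+1) * hh N
  else if (i:ℕ) = 1 then ((GF N β t + 4 ^ (TT N - 1 - t) : ℕ) : ℝ) * hh N else 0
noncomputable def histF (β : ℕ → Bool) (n : ℕ) : List (((Fin d → ℝ) × ℝ) × (Fin d → ℝ)) :=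
  List.ofFn (fun k : Fin n => ((pvec d, qd N k), ansF d N β k))

open Classical in
noncomputable def step (n : ℕ) (β : ℕ → Bool) : Bool :=
  if L (histF d N β n) (pvec d, qd N n) = ansLow d N β n then true else false

noncomputable def blist : ℕ → ℕ → Bool
  | 0 => fun _ => false
  | n+1 => fun k => if k = n then step d N L n (blist n) else blist n k

noncomputable def bitF (n : ℕ) : Bool := step d N L n (blist d N L n)

lemma GF_congr {β β' : ℕ → Bool} {n : ℕ} (h : ∀ k < n, β k = β' k) :
    GF N β n = GF N β' n := by
  unfold GF
  apply Finset.sum_congr rfl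
  intro k hk
  rw [Finset.mem_range] at hk
  unfold sF
  rw [h k hk]

lemma ansF_congr {β β' : ℕ → Bool} {t n : ℕ} (ht : t < n) (h : ∀ k < n, β k = β' k) :
    ansF d N β t = ansF d N β' t := by
  unfold ansF
  rw [GF_congr N (fun k hk => h k (by omega))]

lemma step_congr {β β' : ℕ → Bool} {n : ℕ} (h : ∀ k < n, β k = β' k) :
    step d N L n β = step d N L n β' := by
  unfold step
  have h1 : histF d N β n = histF d N β' n := by
    unfold histF
    congr 1
    funext k
    rw [ansF_congr d N k.isLt h]
  have h2 : ansLow d N β n = ansLow d N β' n := by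
    unfold ansLow
    rw [GF_congr N h]
  rw [h1, h2]

lemma blist_agree : ∀ m k, k < m → blist d N L m k = bitF d N L k := by
  intro m
  induction m with
  | zero => intro k hk; omega
  | succ m ih =>
    intro k hk
    rcases Nat.lt_or_ge k m with h | h
    · have : blist d N L (m+1) k = blist d N L m k := by
        simp [blist, Nat.ne_of_lt h]
      rw [this, ih k h]
    · have hkm : k = m := by omega
      subst hkm
      have : blist d N L (k+1) k = step d N L k (blist d N L k) := by simp [blist]
      rw [this]
      rfl

lemma bitF_eq (n : ℕ) : bitF d N L n = step d N L n (bitF d N L) := by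
  unfold bitF
  exact step_congr d N L (fun k hk => blist_agree d N L n k hk)

/-- the adversary forces a mistake on every day `t < TT N`. -/
lemma mistake (hd : 3 ≤ d) (t : ℕ) :
    L (histF d N (bitF d N L) t) (pvec d, qd N t) ≠ ansF d N (bitF d N L) t := by
  set β := bitF d N L with hβ
  have hstep : β t = step d N L t β := bitF_eq d N L t
  have hpos : (0:ℝ) < hh N := by unfold hh; positivity
  have hGsucc : GF N β (t+1) = GF N β t + sF N β t := by
    unfold GF; rw [Finset.sum_range_succ]
  by_cases hpred : L (histF d N β t) (pvec d, qd N t) = ansLow d N β t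
  · -- then β t = true, so answer is "high" ≠ ansLow
    have hbt : β t = true := by rw [hstep]; unfold step; simp [hpred]
    intro hcon
    rw [hpred] at hcon
    have h1 := congrFun hcon (⟨1, by omega⟩ : Fin d)
    unfold ansLow ansF at h1
    simp only [show ((⟨1, by omega⟩ : Fin d) : ℕ) = 1 from rfl] at h1
    norm_num at h1
    rcases h1 with h1 | h1
    swap
    · exact absurd h1 (ne_of_gt hpos)
    have h3 : GF N β t + 4 ^ (TT N - 1 - t) = GF N β (t+1) := by exact_mod_cast h1
    rw [hGsucc] at h3
    unfold sF at h3
    rw [hbt] at h3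
    have h4 : 1 ≤ 4 ^ (TT N - 1 - t) := Nat.one_le_two_pow.trans (Nat.pow_le_pow_left (by norm_num) _)
    simp at h3
  · intro hcon
    have hbt : β t = false := by rw [hstep]; unfold step; simp [hpred]
    have : ansF d N β t = ansLow d N β t := by
      unfold ansF ansLow
      funext i
      by_cases h0 : (i:ℕ) = 0
      · simp [h0]
      · by_cases h1 : (i:ℕ) = 1
        · simp only [h0, h1, if_false, if_true]
          rw [hGsucc]
          unfold sF
          rw [hbt]
          norm_num
        · simp [h0, h1]
    rw [this] at hcon
    exact hpred hcon

/-! Geometry layer -/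

noncomputable def AM (β : ℕ → Bool) : Matrix (Fin (TT N + 2*d)) (Fin d) ℝ := fun j i =>
  if (j:ℕ) < TT N then
    (if (i:ℕ) = 0 then -(sF N β (j:ℕ) : ℝ) else if (i:ℕ) = 1 then 1 else 0)
  else if (j:ℕ) < TT N + d then (if (i:ℕ) = (j:ℕ) - TT N then 1 else 0)
  else (if (i:ℕ) = (j:ℕ) - (TT N + d) then -1 else 0)

noncomputable def bv (β : ℕ → Bool) : Fin (TT N + 2*d) → ℝ := fun j =>
  if (j:ℕ) < TT N then ((GF N β (j:ℕ) : ℝ) - (j:ℕ) * (sF N β (j:ℕ))) * hh N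
  else if (j:ℕ) = TT N then (TT N : ℝ) * hh N
  else if (j:ℕ) = TT N + 1 then 1
  else 0

lemma dot_two (hd : 3 ≤ d) (a c : ℝ) (y : Fin d → ℝ) :
    (fun i : Fin d => if (i:ℕ) = 0 then a else if (i:ℕ) = 1 then c else 0) ⬝ᵥ y
      = a * y ⟨0, by omega⟩ + c * y ⟨1, by omega⟩ := by
  have : (fun i : Fin d => if (i:ℕ) = 0 then a else if (i:ℕ) = 1 then c else 0)
      = Pi.single (⟨0, by omega⟩ : Fin d) a + Pi.single (⟨1, by omega⟩ : Fin d) c := by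
    funext i
    simp only [Pi.add_apply, Pi.single_apply, Fin.ext_iff]
    by_cases h0 : (i:ℕ) = 0
    · simp [h0]
    · by_cases h1 : (i:ℕ) = 1
      · simp [h0, h1]
      · simp [h0, h1]
  rw [this, add_dotProduct, single_dotProduct, single_dotProduct]

lemma dot_one (c0 : ℕ) (hc : c0 < d) (a : ℝ) (y : Fin d → ℝ) :
    (fun i : Fin d => if (i:ℕ) = c0 then a else 0) ⬝ᵥ y = a * y ⟨c0, hc⟩ := by
  have : (fun i : Fin d => if (i:ℕ) = c0 then a else 0)
      = Pi.single (⟨c0, hc⟩ : Fin d) a := by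
    funext i
    simp only [Pi.single_apply, Fin.ext_iff]
  rw [this, single_dotProduct]

lemma mem_P_iff (hd : 3 ≤ d) (β : ℕ → Bool) (y : Fin d → ℝ) :
    (∀ j, AM d N β j ⬝ᵥ y ≤ bv d N β j) ↔
      ((∀ k, k < TT N → y ⟨1, by omega⟩ ≤ (sF N β k : ℝ) * y ⟨0, by omega⟩
          + ((GF N β k : ℝ) - k * sF N β k) * hh N)
       ∧ y ⟨0, by omega⟩ ≤ (TT N : ℝ) * hh N
       ∧ y ⟨1, by omega⟩ ≤ 1
       ∧ (∀ i : Fin d, 2 ≤ (i:ℕ) → y i ≤ 0)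
       ∧ (∀ i : Fin d, 0 ≤ y i)) := by
  constructor
  · intro H
    refine ⟨?_, ?_, ?_, ?_, ?_⟩
    · intro k hk
      have hj := H ⟨k, by omega⟩
      have hA : AM d N β ⟨k, by omega⟩
          = fun i : Fin d => if (i:ℕ) = 0 then -(sF N β k : ℝ) else if (i:ℕ) = 1 then 1 else 0 := by
        funext i; simp only [AM]; simp [hk]
      have hb : bv d N β ⟨k, by omega⟩ = ((GF N β k : ℝ) - k * sF N β k) * hh N := by
        simp only [bv]; simp [hk]
      rw [hA, hb, dot_two d hd] at hj
      linarith
    · have hj := H ⟨TT N, by omega⟩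
      have hA : AM d N β ⟨TT N, by omega⟩
          = fun i : Fin d => if (i:ℕ) = 0 then (1:ℝ) else 0 := by
        funext i; simp only [AM]
        have h1 : ¬ (TT N < TT N) := by omega
        have h2 : TT N < TT N + d := by omega
        have h3 : TT N - TT N = 0 := by omega
        simp [h1, h2, h3]
      have hb : bv d N β ⟨TT N, by omega⟩ = (TT N : ℝ) * hh N := by
        simp only [bv]; simp
      rw [hA, hb, dot_one d 0 (by omega)] at hj
      linarith
    · have hj := H ⟨TT N + 1, by omega⟩
      have hA : AM d N β ⟨TT N + 1, by omega⟩
          = fun i : Fin d => if (i:ℕ) = 1 then (1:ℝ) else 0 := by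
        funext i; simp only [AM]
        have h1 : ¬ (TT N + 1 < TT N) := by omega
        have h2 : TT N + 1 < TT N + d := by omega
        have h3 : TT N + 1 - TT N = 1 := by omega
        simp [h1, h2, h3]
      have hb : bv d N β ⟨TT N + 1, by omega⟩ = 1 := by
        simp only [bv]; simp
      rw [hA, hb, dot_one d 1 (by omega)] at hj
      linarith
    · intro i hi
      have hj := H ⟨TT N + (i:ℕ), by omega⟩
      have hA : AM d N β ⟨TT N + (i:ℕ), by omega⟩
          = fun i' : Fin d => if (i':ℕ) = (i:ℕ) then (1:ℝ) else 0 := by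
        funext i'; simp only [AM]
        have h1 : ¬ (TT N + (i:ℕ) < TT N) := by omega
        have h2 : TT N + (i:ℕ) < TT N + d := by omega
        have h3 : TT N + (i:ℕ) - TT N = (i:ℕ) := by omega
        simp [h1, h2, h3]
      have hb : bv d N β ⟨TT N + (i:ℕ), by omega⟩ = 0 := by
        simp only [bv]
        have h1 : ¬ (TT N + (i:ℕ) < TT N) := by omega
        have h2 : ¬ (TT N + (i:ℕ) = TT N) := by omega
        have h3 : ¬ (TT N + (i:ℕ) = TT N + 1) := by omega
        simp [h1, h2, h3, show (i:ℕ) ≠ 0 by omega, show (i:ℕ) ≠ 1 by omega]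
      rw [hA, hb, dot_one d (i:ℕ) i.isLt] at hj
      have : (⟨(i:ℕ), i.isLt⟩ : Fin d) = i := by ext; rfl
      rw [this] at hj
      linarith
    · intro i
      have hj := H ⟨TT N + d + (i:ℕ), by omega⟩
      have hA : AM d N β ⟨TT N + d + (i:ℕ), by omega⟩
          = fun i' : Fin d => if (i':ℕ) = (i:ℕ) then (-1:ℝ) else 0 := by
        funext i'; simp only [AM]
        have h1 : ¬ (TT N + d + (i:ℕ) < TT N) := by omega
        have h2 : ¬ (TT N + d + (i:ℕ) < TT N + d) := by omega
        have h3 : TT N + d + (i:ℕ) - (TT N + d) = (i:ℕ) := by omega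
        simp [h1, h2, h3]
      have hb : bv d N β ⟨TT N + d + (i:ℕ), by omega⟩ = 0 := by
        simp only [bv]
        have h1 : ¬ (TT N + d + (i:ℕ) < TT N) := by omega
        have h2 : ¬ (TT N + d + (i:ℕ) = TT N) := by omega
        have h3 : ¬ (TT N + d + (i:ℕ) = TT N + 1) := by omega
        simp [h1, h2, h3]
      rw [hA, hb, dot_one d (i:ℕ) i.isLt] at hj
      have : (⟨(i:ℕ), i.isLt⟩ : Fin d) = i := by ext; rfl
      rw [this] at hj
      linarith
  · rintro ⟨H1, H2, H3, H4, H5⟩ j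
    rcases Nat.lt_or_ge (j:ℕ) (TT N) with hj | hj
    · have hA : AM d N β j
          = fun i : Fin d => if (i:ℕ) = 0 then -(sF N β (j:ℕ) : ℝ) else if (i:ℕ) = 1 then 1 else 0 := by
        funext i; simp only [AM]; simp [hj]
      have hb : bv d N β j = ((GF N β (j:ℕ) : ℝ) - (j:ℕ) * sF N β (j:ℕ)) * hh N := by
        simp only [bv]; simp [hj]
      rw [hA, hb, dot_two d hd]
      have := H1 (j:ℕ) hj
      linarith
    · rcases Nat.lt_or_ge (j:ℕ) (TT N + d) with hj2 | hj2
      · set iv := (j:ℕ) - TT N with hiv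
        have hivd : iv < d := by omega
        have hA : AM d N β j = fun i' : Fin d => if (i':ℕ) = iv then (1:ℝ) else 0 := by
          funext i'; simp only [AM]
          have h1 : ¬ ((j:ℕ) < TT N) := by omega
          simp [h1, hj2, hiv]
        rw [hA, dot_one d iv hivd]
        rcases Nat.lt_or_ge iv 2 with hlt | hge
        · rcases Nat.lt_or_ge iv 1 with h0 | h1
          · have hiv0 : iv = 0 := by omega
            have hjT : (j:ℕ) = TT N := by omega
            have hb : bv d N β j = (TT N : ℝ) * hh N := by
              simp only [bv]
              have h1 : ¬ ((j:ℕ) < TT N) := by omega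
              simp [h1, hjT]
            rw [hb]
            have : (⟨iv, hivd⟩ : Fin d) = ⟨0, by omega⟩ := by
              simp only [Fin.mk.injEq]; omega
            rw [this]
            linarith
          · have hiv1 : iv = 1 := by omega
            have hjT : (j:ℕ) = TT N + 1 := by omega
            have hb : bv d N β j = 1 := by
              simp only [bv]
              have ha : ¬ ((j:ℕ) < TT N) := by omega
              have hc : ¬ ((j:ℕ) = TT N) := by omega
              simp [ha, hc, hjT]
            rw [hb]
            have : (⟨iv, hivd⟩ : Fin d) = ⟨1, by omega⟩ := by
              simp only [Fin.mk.injEq]; omega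
            rw [this]
            linarith
        · have hb : bv d N β j = 0 := by
            simp only [bv]
            have ha : ¬ ((j:ℕ) < TT N) := by omega
            have hc : ¬ ((j:ℕ) = TT N) := by omega
            have he : ¬ ((j:ℕ) = TT N + 1) := by omega
            simp [ha, hc, he]
          rw [hb]
          have := H4 ⟨iv, hivd⟩ hge
          linarith
      · set iv := (j:ℕ) - (TT N + d) with hiv
        have hivd : iv < d := by
          have := j.isLt
          omega
        have hA : AM d N β j = fun i' : Fin d => if (i':ℕ) = iv then (-1:ℝ) else 0 := by
          funext i'; simp only [AM]
          have h1 : ¬ ((j:ℕ) < TT N) := by omega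
          have h2 : ¬ ((j:ℕ) < TT N + d) := by omega
          simp [h1, h2, hiv]
        have hb : bv d N β j = 0 := by
          simp only [bv]
          have ha : ¬ ((j:ℕ) < TT N) := by omega
          have hc : ¬ ((j:ℕ) = TT N) := by omega
          have he : ¬ ((j:ℕ) = TT N + 1) := by omega
          simp [ha, hc, he]
        rw [hA, hb, dot_one d iv hivd]
        have := H5 ⟨iv, hivd⟩
        linarith

/-- generic perturbation lemma: a feasible point with a nonzero admissible
direction is not an extreme point. -/
lemma not_extreme {m' d' : ℕ} (A : Matrix (Fin m') (Fin d') ℝ) (b : Fin m' → ℝ)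
    (y v : Fin d' → ℝ) (hv : v ≠ 0)
    (hy : ∀ j, A j ⬝ᵥ y ≤ b j)
    (H : ∀ j, A j ⬝ᵥ v = 0 ∨ A j ⬝ᵥ y < b j) :
    y ∉ Set.extremePoints ℝ {z : Fin d' → ℝ | ∀ j, A j ⬝ᵥ z ≤ b j} := by
  classical
  intro hext
  rw [Set.extremePoints] at hext
  obtain ⟨hyP, hE⟩ := hext
  obtain ⟨ε, hε, hfeas⟩ : ∃ ε : ℝ, 0 < ε ∧ ∀ j, A j ⬝ᵥ y + ε * |A j ⬝ᵥ v| ≤ b j := by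
    set S := Finset.univ.filter (fun j : Fin m' => A j ⬝ᵥ v ≠ 0) with hS
    rcases S.eq_empty_or_nonempty with hSe | hSne
    · refine ⟨1, one_pos, fun j => ?_⟩
      have hj0 : A j ⬝ᵥ v = 0 := by
        by_contra hne
        have : j ∈ S := by simp [hS, hne]
        rw [hSe] at this
        simp at this
      rw [hj0]
      simpa using hy j
    · set δ := (S.image fun j => (b j - A j ⬝ᵥ y) / |A j ⬝ᵥ v|).min' (hSne.image _) with hδ
      have hδpos : 0 < δ := by
        have hδmem := (S.image fun j => (b j - A j ⬝ᵥ y) / |A j ⬝ᵥ v|).min'_mem (hSne.image _)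
        rw [Finset.mem_image] at hδmem
        obtain ⟨j0, hj0S, hj0⟩ := hδmem
        rw [hδ, ← hj0]
        have hj0ne : A j0 ⬝ᵥ v ≠ 0 := by
          simp only [hS, Finset.mem_filter] at hj0S
          exact hj0S.2
        have h1 : 0 < |A j0 ⬝ᵥ v| := abs_pos.mpr hj0ne
        have h2 : 0 < b j0 - A j0 ⬝ᵥ y := by
          rcases H j0 with h | h
          · exact absurd h hj0ne
          · linarith
        positivity
      refine ⟨δ/2, by positivity, fun j => ?_⟩
      by_cases hj : A j ⬝ᵥ v = 0
      · rw [hj]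
        simpa using hy j
      · have hjS : j ∈ S := by simp [hS, hj]
        have hmin : δ ≤ (b j - A j ⬝ᵥ y)/|A j ⬝ᵥ v| :=
          Finset.min'_le _ _ (Finset.mem_image_of_mem _ hjS)
        have habs : 0 < |A j ⬝ᵥ v| := abs_pos.mpr hj
        rw [le_div_iff₀ habs] at hmin
        have hyj := hy j
        nlinarith [abs_nonneg (A j ⬝ᵥ v)]
  set z₁ := y - ε • v with hz₁
  set z₂ := y + ε • v with hz₂
  have hmem₁ : z₁ ∈ {z : Fin d' → ℝ | ∀ j, A j ⬝ᵥ z ≤ b j} := by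
    intro j
    have : A j ⬝ᵥ z₁ = A j ⬝ᵥ y - ε * (A j ⬝ᵥ v) := by
      rw [hz₁, dotProduct_sub, dotProduct_smul]
      ring_nf
    rw [this]
    have h1 := hfeas j
    have h2 : -(A j ⬝ᵥ v) ≤ |A j ⬝ᵥ v| := neg_le_abs (A j ⬝ᵥ v)
    nlinarith
  have hmem₂ : z₂ ∈ {z : Fin d' → ℝ | ∀ j, A j ⬝ᵥ z ≤ b j} := by
    intro j
    have : A j ⬝ᵥ z₂ = A j ⬝ᵥ y + ε * (A j ⬝ᵥ v) := by
      rw [hz₂, dotProduct_add, dotProduct_smul]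
      rfl
    rw [this]
    have h1 := hfeas j
    have h2 : A j ⬝ᵥ v ≤ |A j ⬝ᵥ v| := le_abs_self _
    nlinarith
  have hseg : y ∈ openSegment ℝ z₁ z₂ := by
    refine ⟨1/2, 1/2, by norm_num, by norm_num, by norm_num, ?_⟩
    rw [hz₁, hz₂]
    module
  have := hE hmem₁ hmem₂ hseg
  rw [hz₁] at this
  have hεv : ε • v = 0 := by
    have : y - ε • v - y = 0 := by rw [this]; abel
    simpa using this
  rcases smul_eq_zero.mp hεv with h | h
  · exact absurd h (ne_of_gt hε)
  · exact hv h

/-- the pattern vector with entries `a0, a1` in coordinates 0 and 1. -/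
noncomputable def pat (a0 a1 : ℝ) : Fin d → ℝ :=
  fun i => if (i:ℕ) = 0 then a0 else if (i:ℕ) = 1 then a1 else 0

lemma pat_ne_zero (hd : 3 ≤ d) {a0 a1 : ℝ} (h : a0 ≠ 0 ∨ a1 ≠ 0) : pat d a0 a1 ≠ 0 := by
  intro hc
  rcases h with h | h
  · have := congrFun hc (⟨0, by omega⟩ : Fin d)
    simp [pat] at this
    exact h this
  · have := congrFun hc (⟨1, by omega⟩ : Fin d)
    simp [pat] at this
    exact h this

lemma pert_cases (hd : 3 ≤ d) (β : ℕ → Bool) (y : Fin d → ℝ) (a0 a1 : ℝ)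
    (Hrow : ∀ k, k < TT N → a1 - (sF N β k : ℝ) * a0 = 0 ∨
        y ⟨1, by omega⟩ < (sF N β k : ℝ) * y ⟨0, by omega⟩
          + ((GF N β k : ℝ) - k * sF N β k) * hh N)
    (H0 : a0 = 0 ∨ y ⟨0, by omega⟩ < (TT N : ℝ) * hh N)
    (H1 : a1 = 0 ∨ y ⟨1, by omega⟩ < 1)
    (H0' : a0 = 0 ∨ 0 < y ⟨0, by omega⟩)
    (H1' : a1 = 0 ∨ 0 < y ⟨1, by omega⟩) :
    ∀ j, AM d N β j ⬝ᵥ pat d a0 a1 = 0 ∨ AM d N β j ⬝ᵥ y < bv d N β j := by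
  intro j
  have hv0 : pat d a0 a1 ⟨0, by omega⟩ = a0 := by simp [pat]
  have hv1 : pat d a0 a1 ⟨1, by omega⟩ = a1 := by simp [pat]
  rcases Nat.lt_or_ge (j:ℕ) (TT N) with hj | hj
  · have hA : AM d N β j
        = fun i : Fin d => if (i:ℕ) = 0 then -(sF N β (j:ℕ) : ℝ) else if (i:ℕ) = 1 then 1 else 0 := by
      funext i; simp only [AM]; simp [hj]
    have hb : bv d N β j = ((GF N β (j:ℕ) : ℝ) - (j:ℕ) * sF N β (j:ℕ)) * hh N := by
      simp only [bv]; simp [hj]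
    rcases Hrow (j:ℕ) hj with h | h
    · left
      rw [hA, dot_two d hd, hv0, hv1]
      linarith
    · right
      rw [hA, hb, dot_two d hd]
      linarith
  · rcases Nat.lt_or_ge (j:ℕ) (TT N + d) with hj2 | hj2
    · set iv := (j:ℕ) - TT N with hiv
      have hivd : iv < d := by omega
      have hA : AM d N β j = fun i' : Fin d => if (i':ℕ) = iv then (1:ℝ) else 0 := by
        funext i'; simp only [AM]
        have h1 : ¬ ((j:ℕ) < TT N) := by omega
        simp [h1, hj2, hiv]
      rcases Nat.lt_or_ge iv 2 with hlt | hge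
      · rcases Nat.lt_or_ge iv 1 with h0 | h1
        · -- iv = 0 : row e₀ ≤ T·h
          have hiv0 : iv = 0 := by omega
          have hjT : (j:ℕ) = TT N := by omega
          have hmk : (⟨iv, hivd⟩ : Fin d) = ⟨0, by omega⟩ := by
            simp only [Fin.mk.injEq]; omega
          rcases H0 with h | h
          · left
            rw [hA, dot_one d iv hivd, hmk, hv0, h]
            ring
          · right
            have hb : bv d N β j = (TT N : ℝ) * hh N := by
              simp only [bv]
              have ha : ¬ ((j:ℕ) < TT N) := by omega
              simp [ha, hjT]
            rw [hA, hb, dot_one d iv hivd, hmk]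
            linarith
        · -- iv = 1 : row e₁ ≤ 1
          have hiv1 : iv = 1 := by omega
          have hjT : (j:ℕ) = TT N + 1 := by omega
          have hmk : (⟨iv, hivd⟩ : Fin d) = ⟨1, by omega⟩ := by
            simp only [Fin.mk.injEq]; omega
          rcases H1 with h | h
          · left
            rw [hA, dot_one d iv hivd, hmk, hv1, h]
            ring
          · right
            have hb : bv d N β j = 1 := by
              simp only [bv]
              have ha : ¬ ((j:ℕ) < TT N) := by omega
              have hc : ¬ ((j:ℕ) = TT N) := by omega
              simp [ha, hc, hjT]
            rw [hA, hb, dot_one d iv hivd, hmk]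
            linarith
      · -- iv ≥ 2 : direction vanishes there
        left
        rw [hA, dot_one d iv hivd]
        have : pat d a0 a1 ⟨iv, hivd⟩ = 0 := by
          simp only [pat]
          have h1 : ¬ (iv = 0) := by omega
          have h2 : ¬ (iv = 1) := by omega
          simp [h1, h2]
        rw [this]
        ring
    · set iv := (j:ℕ) - (TT N + d) with hiv
      have hivd : iv < d := by
        have := j.isLt
        omega
      have hA : AM d N β j = fun i' : Fin d => if (i':ℕ) = iv then (-1:ℝ) else 0 := by
        funext i'; simp only [AM]
        have h1 : ¬ ((j:ℕ) < TT N) := by omega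
        have h2 : ¬ ((j:ℕ) < TT N + d) := by omega
        simp [h1, h2, hiv]
      have hb : bv d N β j = 0 := by
        simp only [bv]
        have ha : ¬ ((j:ℕ) < TT N) := by omega
        have hc : ¬ ((j:ℕ) = TT N) := by omega
        have he : ¬ ((j:ℕ) = TT N + 1) := by omega
        simp [ha, hc, he]
      rcases Nat.lt_or_ge iv 2 with hlt | hge
      · rcases Nat.lt_or_ge iv 1 with h0 | h1
        · have hmk : (⟨iv, hivd⟩ : Fin d) = ⟨0, by omega⟩ := by
            simp only [Fin.mk.injEq]; omega
          rcases H0' with h | h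
          · left
            rw [hA, dot_one d iv hivd, hmk, hv0, h]
            ring
          · right
            rw [hA, hb, dot_one d iv hivd, hmk]
            linarith
        · have hmk : (⟨iv, hivd⟩ : Fin d) = ⟨1, by omega⟩ := by
            simp only [Fin.mk.injEq]; omega
          rcases H1' with h | h
          · left
            rw [hA, dot_one d iv hivd, hmk, hv1, h]
            ring
          · right
            rw [hA, hb, dot_one d iv hivd, hmk]
            linarith
      · left
        rw [hA, dot_one d iv hivd]
        have : pat d a0 a1 ⟨iv, hivd⟩ = 0 := by
          simp only [pat]
          have h1 : ¬ (iv = 0) := by omega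
          have h2 : ¬ (iv = 1) := by omega
          simp [h1, h2]
        rw [this]
        ring

lemma GF_succ (β : ℕ → Bool) (n : ℕ) : GF N β (n+1) = GF N β n + sF N β n := by
  unfold GF
  rw [Finset.sum_range_succ]

lemma cross_lower (β : ℕ → Bool) {c : ℕ} (hc1 : 1 ≤ c) (hc : c < TT N) (u w : ℝ)
    (tc : w = (sF N β c : ℝ) * u + ((GF N β c : ℝ) - c * sF N β c) * hh N)
    (fc : w ≤ (sF N β (c-1) : ℝ) * u + ((GF N β (c-1) : ℝ) - (c-1 : ℕ) * sF N β (c-1)) * hh N) :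
    (c:ℝ) * hh N ≤ u := by
  have hGc : (GF N β c : ℝ) = GF N β (c-1) + sF N β (c-1) := by
    have := GF_succ N β (c-1)
    have h1 : c - 1 + 1 = c := by omega
    rw [h1] at this
    exact_mod_cast this
  have hS : (sF N β c : ℝ) < sF N β (c-1) := by
    exact_mod_cast sF_strict_anti N β (show c-1 < c by omega) hc
  have hcast : ((c-1 : ℕ) : ℝ) = (c:ℝ) - 1 := by
    push_cast [hc1]
    ring
  rw [hcast] at fc
  rw [hGc] at tc
  by_contra hcon
  push_neg at hcon
  have hprod : 0 < ((sF N β (c-1) : ℝ) - sF N β c) * ((c:ℝ) * hh N - u) :=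
    mul_pos (by linarith) (by linarith)
  nlinarith [hprod]

lemma cross_upper (β : ℕ → Bool) {a : ℕ} (ha : a + 1 < TT N) (u w : ℝ)
    (ta : w = (sF N β a : ℝ) * u + ((GF N β a : ℝ) - a * sF N β a) * hh N)
    (fa : w ≤ (sF N β (a+1) : ℝ) * u + ((GF N β (a+1) : ℝ) - (a+1 : ℕ) * sF N β (a+1)) * hh N) :
    u ≤ ((a:ℝ) + 1) * hh N := by
  have hGa : (GF N β (a+1) : ℝ) = GF N β a + sF N β a := by
    exact_mod_cast GF_succ N β a
  have hS : (sF N β (a+1) : ℝ) < sF N β a := by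
    exact_mod_cast sF_strict_anti N β (show a < a+1 by omega) ha
  have hcast : ((a+1 : ℕ) : ℝ) = (a:ℝ) + 1 := by push_cast; ring
  rw [hcast] at fa
  rw [hGa] at fa
  by_contra hcon
  push_neg at hcon
  have hprod : 0 < ((sF N β a : ℝ) - sF N β (a+1)) * (u - ((a:ℝ)+1) * hh N) :=
    mul_pos (by linarith) (by linarith)
  nlinarith [hprod]

set_option maxHeartbeats 1600000 in
lemma extreme_grid (hd : 3 ≤ d) (hN : 1 ≤ N) (β : ℕ → Bool) :
    ∀ y ∈ Set.extremePoints ℝ {z : Fin d → ℝ | ∀ j, AM d N β j ⬝ᵥ z ≤ bv d N β j},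
      ∀ i : Fin d, ∃ z : ℤ, y i = (z : ℝ) * hh N := by
  intro y hy i
  have hyP : ∀ j, AM d N β j ⬝ᵥ y ≤ bv d N β j := hy.1
  obtain ⟨C1, C2, C3, C4, C5⟩ := (mem_P_iff d N hd β y).1 hyP
  have hpos : 0 < hh N := hh_pos N
  have hT1 : 1 ≤ TT N := TT_pos N
  set u := y (⟨0, by omega⟩ : Fin d) with hu
  set w := y (⟨1, by omega⟩ : Fin d) with hw
  have hu0 : 0 ≤ u := C5 _
  have hw0 : 0 ≤ w := C5 _
  have hone : (1:ℝ) = ((2^N : ℤ) : ℝ) * hh N := by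
    unfold hh
    push_cast
    rw [mul_inv_cancel₀ (by positivity)]
  have key : (∃ z : ℤ, u = (z:ℝ) * hh N) ∧ (∃ z : ℤ, w = (z:ℝ) * hh N) := by
    by_cases hw1 : w = 1
    · -- top case : forces u = T·h
      have hline := C1 (TT N - 1) (by omega)
      have hGT : (GF N β (TT N) : ℝ) = GF N β (TT N - 1) + sF N β (TT N - 1) := by
        have := GF_succ N β (TT N - 1)
        have h1 : TT N - 1 + 1 = TT N := by omega
        rw [h1] at this
        exact_mod_cast this
      have hG1 : (GF N β (TT N) : ℝ) * hh N ≤ 1 := by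
        have h1 : (GF N β (TT N) : ℝ) ≤ 2^N := by
          exact_mod_cast GF_total_le N hN β
        have h2 : (2:ℝ)^N * hh N = 1 := by
          unfold hh
          rw [mul_inv_cancel₀ (by positivity)]
        nlinarith
      have hcast : ((TT N - 1 : ℕ) : ℝ) = (TT N : ℝ) - 1 := by push_cast [hT1]; ring
      rw [hcast] at hline
      have hS1 : (1:ℝ) ≤ sF N β (TT N - 1) := by exact_mod_cast sF_pos N β (TT N - 1)
      have huT : u = (TT N : ℝ) * hh N := by
        rw [hGT] at hG1
        have hu2 := C2
        by_contra hcon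
        have hcon' : u < (TT N : ℝ) * hh N := lt_of_le_of_ne hu2 hcon
        have hprod : 0 < (sF N β (TT N - 1) : ℝ) * ((TT N : ℝ) * hh N - u) :=
          mul_pos (by linarith) (by linarith)
        nlinarith [hprod]
      exact ⟨⟨(TT N : ℤ), by rw [huT]; push_cast; ring⟩, ⟨(2^N : ℤ), by rw [hw1, hone]⟩⟩
    · have hwlt : w < 1 := lt_of_le_of_ne (by rw [hw]; exact C3) hw1
      by_cases htight : ∃ k, k < TT N ∧ w = (sF N β k : ℝ) * u + ((GF N β k : ℝ) - k * sF N β k) * hh N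
      · obtain ⟨k, hk, hkeq⟩ := htight
        by_cases h2t : ∃ k', k' < TT N ∧ k' ≠ k ∧
            w = (sF N β k' : ℝ) * u + ((GF N β k' : ℝ) - k' * sF N β k') * hh N
        · -- two tight lines : u = c·h where c = max
          obtain ⟨k', hk', hne, hkeq'⟩ := h2t
          obtain ⟨a, c, hac, hcT, ta, tc⟩ :
              ∃ a c : ℕ, a < c ∧ c < TT N ∧
                w = (sF N β a : ℝ) * u + ((GF N β a : ℝ) - a * sF N β a) * hh N ∧
                w = (sF N β c : ℝ) * u + ((GF N β c : ℝ) - c * sF N β c) * hh N := by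
            rcases Nat.lt_or_ge k k' with h | h
            · exact ⟨k, k', h, hk', hkeq, hkeq'⟩
            · exact ⟨k', k, by omega, hk, hkeq', hkeq⟩
          have hlo : (c:ℝ) * hh N ≤ u :=
            cross_lower N β (by omega) hcT u w tc (C1 (c-1) (by omega))
          have hhi : u ≤ ((a:ℝ) + 1) * hh N :=
            cross_upper N β (by omega) u w ta (C1 (a+1) (by omega))
          have hac' : ((a:ℝ) + 1) ≤ (c:ℝ) := by exact_mod_cast hac
          have huc : u = (c:ℝ) * hh N := by nlinarith
          refine ⟨⟨(c:ℤ), by rw [huc]; push_cast; ring⟩, ⟨(GF N β c : ℤ), ?_⟩⟩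
          rw [tc, huc]
          push_cast
          ring
        · -- unique tight line k
          push_neg at h2t
          have hstrict : ∀ k', k' < TT N → k' ≠ k →
              w < (sF N β k' : ℝ) * u + ((GF N β k' : ℝ) - k' * sF N β k') * hh N := by
            intro k' h1 h2
            exact lt_of_le_of_ne (by rw [hw]; exact C1 k' h1) (h2t k' h1 h2)
          by_cases hu0' : u = 0
          · refine ⟨⟨0, by rw [hu0']; norm_num⟩, ⟨(GF N β k : ℤ) - k * sF N β k, ?_⟩⟩
            rw [hkeq, hu0']
            push_cast
            ring
          · by_cases huT : u = (TT N : ℝ) * hh N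
            · refine ⟨⟨(TT N : ℤ), by rw [huT]; push_cast; ring⟩,
                ⟨(GF N β k : ℤ) + ((TT N : ℤ) - k) * sF N β k, ?_⟩⟩
              rw [hkeq, huT]
              push_cast
              ring
            · -- interior: contradiction with extremality
              exfalso
              have hult : u < (TT N : ℝ) * hh N := lt_of_le_of_ne (by rw [hu]; exact C2) huT
              have hugt : 0 < u := lt_of_le_of_ne hu0 (Ne.symm hu0')
              have hwgt : 0 < w := by
                have h1 : (1:ℝ) ≤ sF N β k := by exact_mod_cast sF_pos N β k
                have h2 : (0:ℝ) ≤ (GF N β k : ℝ) - k * sF N β k := by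
                  have := GF_ge_mul N β hk
                  have : ((k * sF N β k : ℕ) : ℝ) ≤ (GF N β k : ℝ) := by exact_mod_cast this
                  push_cast at this
                  linarith
                rw [hkeq]
                nlinarith
              apply not_extreme (AM d N β) (bv d N β) y (pat d 1 (sF N β k))
                (pat_ne_zero d hd (Or.inl one_ne_zero)) hyP ?_ hy
              apply pert_cases d N hd β y 1 (sF N β k)
              · intro k' hk'
                by_cases hkk : k' = k
                · left
                  rw [hkk]
                  ring
                · right
                  exact hstrict k' hk' hkk
              · right; exact hult
              · right; exact hwlt
              · right; exact hugt
              · right; exact hwgt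
      · -- no tight line
        push_neg at htight
        have hstrict : ∀ k, k < TT N →
            w < (sF N β k : ℝ) * u + ((GF N β k : ℝ) - k * sF N β k) * hh N := by
          intro k h1
          exact lt_of_le_of_ne (by rw [hw]; exact C1 k h1) (htight k h1)
        by_cases hw0' : w = 0
        · by_cases hu0' : u = 0
          · exact ⟨⟨0, by rw [hu0']; norm_num⟩, ⟨0, by rw [hw0']; norm_num⟩⟩
          · by_cases huT : u = (TT N : ℝ) * hh N
            · exact ⟨⟨(TT N : ℤ), by rw [huT]; push_cast; ring⟩, ⟨0, by rw [hw0']; norm_num⟩⟩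
            · exfalso
              have hult : u < (TT N : ℝ) * hh N := lt_of_le_of_ne (by rw [hu]; exact C2) huT
              have hugt : 0 < u := lt_of_le_of_ne hu0 (Ne.symm hu0')
              apply not_extreme (AM d N β) (bv d N β) y (pat d 1 0)
                (pat_ne_zero d hd (Or.inl one_ne_zero)) hyP ?_ hy
              apply pert_cases d N hd β y 1 0
              · intro k hk
                right
                exact hstrict k hk
              · right; exact hult
              · left; rfl
              · right; exact hugt
              · left; rfl
        · exfalso
          have hwgt : 0 < w := lt_of_le_of_ne hw0 (Ne.symm hw0')
          apply not_extreme (AM d N β) (bv d N β) y (pat d 0 1)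
            (pat_ne_zero d hd (Or.inr one_ne_zero)) hyP ?_ hy
          apply pert_cases d N hd β y 0 1
          · intro k hk
            right
            exact hstrict k hk
          · left; rfl
          · right; exact hwlt
          · left; rfl
          · right; exact hwgt
  rcases Nat.lt_or_ge (i:ℕ) 2 with hilt | hige
  · rcases Nat.lt_or_ge (i:ℕ) 1 with h0 | h1
    · have : i = (⟨0, by omega⟩ : Fin d) := by
        apply Fin.ext
        simpa using h0
      rw [this]
      exact key.1
    · have : i = (⟨1, by omega⟩ : Fin d) := by
        apply Fin.ext
        simp
        omega
      rw [this]
      exact key.2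
  · refine ⟨0, ?_⟩
    have h1 := C4 i hige
    have h2 := C5 i
    have : y i = 0 := le_antisymm h1 h2
    rw [this]
    norm_num

lemma ansF_eval0 (hd : 3 ≤ d) (β : ℕ → Bool) (t : ℕ) :
    ansF d N β t ⟨0, by omega⟩ = ((t:ℝ)+1) * hh N := by
  simp [ansF]

lemma ansF_eval1 (hd : 3 ≤ d) (β : ℕ → Bool) (t : ℕ) :
    ansF d N β t ⟨1, by omega⟩ = (GF N β (t+1) : ℝ) * hh N := by
  simp [ansF]

lemma T_h_le_one (hN : 1 ≤ N) : (TT N : ℝ) * hh N ≤ 1 := by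
  have h1 : TT N ≤ 2^N := by
    have h2 : TT N ≤ N := by unfold TT; omega
    have h3 : N < 2^N := Nat.lt_two_pow_self
    omega
  have h2 : (TT N : ℝ) ≤ 2^N := by exact_mod_cast h1
  have h3 : (2:ℝ)^N * hh N = 1 := by
    unfold hh
    rw [mul_inv_cancel₀ (by positivity)]
  nlinarith [hh_pos N]

lemma GF_h_le_one (hN : 1 ≤ N) (β : ℕ → Bool) {n : ℕ} (hn : n ≤ TT N) :
    (GF N β n : ℝ) * hh N ≤ 1 := by
  have h1 : GF N β n ≤ 2^N := le_trans (GF_mono N β hn) (GF_total_le N hN β)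
  have h2 : (GF N β n : ℝ) ≤ 2^N := by exact_mod_cast h1
  have h3 : (2:ℝ)^N * hh N = 1 := by
    unfold hh
    rw [mul_inv_cancel₀ (by positivity)]
  nlinarith [hh_pos N]

lemma day_feas (hd : 3 ≤ d) (hN : 1 ≤ N) (β : ℕ → Bool) {t : ℕ} (ht : t < TT N) :
    ∀ j, AM d N β j ⬝ᵥ ansF d N β t ≤ bv d N β j := by
  rw [mem_P_iff d N hd β]
  have hpos := hh_pos N
  refine ⟨?_, ?_, ?_, ?_, ?_⟩
  · intro k hk
    rw [ansF_eval0 d N hd, ansF_eval1 d N hd]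
    rcases le_or_gt k (t+1) with hkt | hkt
    · have hnat := GF_upper N β hkt (by omega)
      have hcast : (GF N β (t+1) : ℝ) ≤ GF N β k + ((t:ℝ) + 1 - k) * sF N β k := by
        have h2 : ((GF N β k + (t+1-k) * sF N β k : ℕ) : ℝ)
            = (GF N β k : ℝ) + ((t:ℝ) + 1 - k) * sF N β k := by
          push_cast [Nat.cast_sub hkt]
          ring
        calc (GF N β (t+1) : ℝ) ≤ ((GF N β k + (t+1-k) * sF N β k : ℕ) : ℝ) := by
              exact_mod_cast hnat
        _ = _ := h2
      nlinarith [mul_le_mul_of_nonneg_right hcast hpos.le]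
    · have hnat := GF_lower N β (show t+1 ≤ k by omega) hk
      have hcast : (GF N β (t+1) : ℝ) + ((k:ℝ) - (t+1)) * sF N β k ≤ GF N β k := by
        have h2 : ((GF N β (t+1) + (k-(t+1)) * sF N β k : ℕ) : ℝ)
            = (GF N β (t+1) : ℝ) + ((k:ℝ) - ((t:ℝ)+1)) * sF N β k := by
          push_cast [Nat.cast_sub (show t+1 ≤ k by omega)]
          ring
        calc (GF N β (t+1) : ℝ) + ((k:ℝ) - (t+1)) * sF N β k
            = ((GF N β (t+1) + (k-(t+1)) * sF N β k : ℕ) : ℝ) := by rw [h2]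
        _ ≤ (GF N β k : ℝ) := by exact_mod_cast hnat
      nlinarith [mul_le_mul_of_nonneg_right hcast hpos.le]
  · rw [ansF_eval0 d N hd]
    have : (t:ℝ) + 1 ≤ TT N := by exact_mod_cast ht
    nlinarith
  · rw [ansF_eval1 d N hd]
    exact GF_h_le_one N hN β (by omega)
  · intro i hi
    unfold ansF
    have h1 : ¬ ((i:ℕ) = 0) := by omega
    have h2 : ¬ ((i:ℕ) = 1) := by omega
    simp [h1, h2]
  · intro i
    unfold ansF
    by_cases h1 : (i:ℕ) = 0
    · simp [h1]
      positivity
    · by_cases h2 : (i:ℕ) = 1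
      · simp [h1, h2]
        positivity
      · simp [h1, h2]

lemma pvec_dot (hd : 3 ≤ d) (y : Fin d → ℝ) : pvec d ⬝ᵥ y = y ⟨0, by omega⟩ := by
  have : pvec d = fun i : Fin d => if (i:ℕ) = 0 then (1:ℝ) else 0 := rfl
  rw [this, dot_one d 0 (by omega)]
  ring

lemma cvec_dot (hd : 3 ≤ d) (y : Fin d → ℝ) : pat d 0 1 ⬝ᵥ y = y ⟨1, by omega⟩ := by
  have : pat d 0 1 = fun i : Fin d => if (i:ℕ) = 0 then (0:ℝ) else if (i:ℕ) = 1 then 1 else 0 := rfl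
  rw [this, dot_two d hd]
  ring

lemma day_opt (hd : 3 ≤ d) (hN : 1 ≤ N) (β : ℕ → Bool) {t : ℕ} (ht : t < TT N)
    (y : Fin d → ℝ) (hy : ∀ j, AM d N β j ⬝ᵥ y ≤ bv d N β j)
    (hq : pvec d ⬝ᵥ y ≤ qd N t) :
    pat d 0 1 ⬝ᵥ y ≤ pat d 0 1 ⬝ᵥ ansF d N β t := by
  obtain ⟨C1, C2, C3, C4, C5⟩ := (mem_P_iff d N hd β y).1 hy
  rw [cvec_dot d hd, cvec_dot d hd, ansF_eval1 d N hd]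
  rw [pvec_dot d hd] at hq
  unfold qd at hq
  have hline := C1 t ht
  have hGsucc : (GF N β (t+1) : ℝ) = GF N β t + sF N β t := by
    exact_mod_cast GF_succ N β t
  have hS : (0:ℝ) < sF N β t := by exact_mod_cast sF_pos N β t
  have hpos := hh_pos N
  nlinarith [mul_le_mul_of_nonneg_left hq hS.le]

lemma day_uniq (hd : 3 ≤ d) (hN : 1 ≤ N) (β : ℕ → Bool) {t : ℕ} (ht : t < TT N)
    (y : Fin d → ℝ) (hy : ∀ j, AM d N β j ⬝ᵥ y ≤ bv d N β j)
    (hq : pvec d ⬝ᵥ y ≤ qd N t)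
    (heq : pat d 0 1 ⬝ᵥ y = pat d 0 1 ⬝ᵥ ansF d N β t) :
    y = ansF d N β t := by
  obtain ⟨C1, C2, C3, C4, C5⟩ := (mem_P_iff d N hd β y).1 hy
  rw [cvec_dot d hd, cvec_dot d hd, ansF_eval1 d N hd] at heq
  rw [pvec_dot d hd] at hq
  unfold qd at hq
  have hline := C1 t ht
  have hGsucc : (GF N β (t+1) : ℝ) = GF N β t + sF N β t := by
    exact_mod_cast GF_succ N β t
  have hS : (0:ℝ) < sF N β t := by exact_mod_cast sF_pos N β t
  have hpos := hh_pos N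
  have hu : y ⟨0, by omega⟩ = ((t:ℝ)+1) * hh N := by
    by_contra hcon
    have hlt : y ⟨0, by omega⟩ < ((t:ℝ)+1) * hh N := lt_of_le_of_ne hq hcon
    have hprod : 0 < (sF N β t : ℝ) * (((t:ℝ)+1) * hh N - y ⟨0, by omega⟩) :=
      mul_pos hS (by linarith)
    nlinarith [hprod]
  funext i
  rcases Nat.lt_or_ge (i:ℕ) 2 with hilt | hige
  · rcases Nat.lt_or_ge (i:ℕ) 1 with h0 | h1
    · have hi : i = (⟨0, by omega⟩ : Fin d) := by
        apply Fin.ext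
        simpa using h0
      rw [hi, hu, ansF_eval0 d N hd]
    · have hi : i = (⟨1, by omega⟩ : Fin d) := by
        apply Fin.ext
        simp
        omega
      rw [hi, heq, ansF_eval1 d N hd]
  · have h1 := C4 i hige
    have h2 := C5 i
    have h3 : y i = 0 := le_antisymm h1 h2
    rw [h3]
    unfold ansF
    have h4 : ¬ ((i:ℕ) = 0) := by omega
    have h5 : ¬ ((i:ℕ) = 1) := by omega
    simp [h4, h5]

lemma abs_le_one (hd : 3 ≤ d) (hN : 1 ≤ N) (β : ℕ → Bool)
    (y : Fin d → ℝ) (hy : ∀ j, AM d N β j ⬝ᵥ y ≤ bv d N β j) (i : Fin d) : |y i| ≤ 1 := by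
  obtain ⟨C1, C2, C3, C4, C5⟩ := (mem_P_iff d N hd β y).1 hy
  rw [abs_le]
  constructor
  · have := C5 i
    linarith
  · rcases Nat.lt_or_ge (i:ℕ) 2 with hilt | hige
    · rcases Nat.lt_or_ge (i:ℕ) 1 with h0 | h1
      · have hi : i = (⟨0, by omega⟩ : Fin d) := by
          apply Fin.ext
          simpa using h0
        rw [hi]
        exact le_trans C2 (T_h_le_one N hN)
      · have hi : i = (⟨1, by omega⟩ : Fin d) := by
          apply Fin.ext
          simp
          omega
        rw [hi]
        exact C3
    · have := C4 i hige
      linarith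

lemma bounded_P (hd : 3 ≤ d) (hN : 1 ≤ N) (β : ℕ → Bool) :
    Bornology.IsBounded {y : Fin d → ℝ | ∀ j, AM d N β j ⬝ᵥ y ≤ bv d N β j} := by
  apply Metric.isBounded_closedBall (x := (0 : Fin d → ℝ)) (r := 1) |>.subset
  intro y hy
  rw [Metric.mem_closedBall, dist_zero_right]
  rw [pi_norm_le_iff_of_nonneg (by norm_num)]
  intro i
  rw [Real.norm_eq_abs]
  exact abs_le_one d N hd hN β y hy i

end Adv

open Classical in
/-- Theorem 3.9 (lower bound): for `d ≥ 3`, against any deterministic learner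
in the Known Objective Problem there is a bounded polytope `P = {x | Ax ≤ b}`
inside the unit `ℓ∞`-ball, whose vertices have coordinates that are integer
multiples of `2^{-N}`, a known objective `c`, and a sequence of additional
constraints, such that each day's optimum is unique and the learner makes at
least `Ω(N)` mistakes. -/
theorem stmt_10 :
    ∃ γ : ℝ, 0 < γ ∧
      ∀ (d N : ℕ), 3 ≤ d → 1 ≤ N →
      ∀ L : List (((Fin d → ℝ) × ℝ) × (Fin d → ℝ)) →
            ((Fin d → ℝ) × ℝ) → (Fin d → ℝ),
      ∃ (m : ℕ) (A : Matrix (Fin m) (Fin d) ℝ) (b : Fin m → ℝ)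
        (c : Fin d → ℝ) (T : ℕ) (pc : Fin T → ((Fin d → ℝ) × ℝ))
        (x : Fin T → (Fin d → ℝ)),
        1 ≤ m ∧
        Bornology.IsBounded {y : Fin d → ℝ | ∀ j, A j ⬝ᵥ y ≤ b j} ∧
        (∀ y ∈ {y : Fin d → ℝ | ∀ j, A j ⬝ᵥ y ≤ b j}, ∀ i, |y i| ≤ 1) ∧
        (∀ y ∈ Set.extremePoints ℝ {y : Fin d → ℝ | ∀ j, A j ⬝ᵥ y ≤ b j},
          ∀ i, ∃ z : ℤ, y i = (z : ℝ) / 2 ^ N) ∧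
        (∀ t : Fin T,
          (∀ j, A j ⬝ᵥ x t ≤ b j) ∧ (pc t).1 ⬝ᵥ x t ≤ (pc t).2 ∧
          (∀ y, (∀ j, A j ⬝ᵥ y ≤ b j) → (pc t).1 ⬝ᵥ y ≤ (pc t).2 →
            c ⬝ᵥ y ≤ c ⬝ᵥ x t) ∧
          (∀ y, (∀ j, A j ⬝ᵥ y ≤ b j) → (pc t).1 ⬝ᵥ y ≤ (pc t).2 →
            c ⬝ᵥ y = c ⬝ᵥ x t → y = x t)) ∧
        γ * N ≤
          ((Finset.univ.filter fun t : Fin T =>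
            L ((List.ofFn fun s : Fin T => (pc s, x s)).take t) (pc t) ≠ x t).card : ℝ) := by
  refine ⟨1/4, by norm_num, ?_⟩
  intro d N hd hN L
  set β := Adv.bitF d N L with hβ
  refine ⟨Adv.TT N + 2*d, Adv.AM d N β, Adv.bv d N β, Adv.pat d 0 1, Adv.TT N,
    (fun t => (Adv.pvec d, Adv.qd N t.val)), (fun t => Adv.ansF d N β t.val),
    ?_, ?_, ?_, ?_, ?_, ?_⟩
  · have := Adv.TT_pos N
    omega
  · exact Adv.bounded_P d N hd hN β
  · intro y hy i
    exact Adv.abs_le_one d N hd hN β y hy i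
  · intro y hy i
    obtain ⟨z, hz⟩ := Adv.extreme_grid d N hd hN β y hy i
    refine ⟨z, ?_⟩
    rw [hz]
    unfold Adv.hh
    rw [div_eq_mul_inv]
  · intro t
    refine ⟨Adv.day_feas d N hd hN β t.isLt, ?_,
      fun y h1 h2 => Adv.day_opt d N hd hN β t.isLt y h1 h2,
      fun y h1 h2 h3 => Adv.day_uniq d N hd hN β t.isLt y h1 h2 h3⟩
    dsimp only
    rw [Adv.pvec_dot d hd, Adv.ansF_eval0 d N hd]
    unfold Adv.qd
    exact le_rfl
  · dsimp only
    have hall : ∀ t : Fin (Adv.TT N),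
        L ((List.ofFn fun s : Fin (Adv.TT N) =>
            ((Adv.pvec d, Adv.qd N s.val), Adv.ansF d N β s.val)).take t.val)
          (Adv.pvec d, Adv.qd N t.val) ≠ Adv.ansF d N β t.val := by
      intro t
      have hlist : (List.ofFn fun s : Fin (Adv.TT N) =>
          ((Adv.pvec d, Adv.qd N s.val), Adv.ansF d N β s.val)).take t.val
            = Adv.histF d N β t.val := by
        apply List.ext_getElem
        · simp [Adv.histF]
        · intro n h1 h2
          simp [Adv.histF]
      rw [hlist]
      exact Adv.mistake d N L hd t.val
    have hfilter : (Finset.univ.filter fun t : Fin (Adv.TT N) =>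
        L ((List.ofFn fun s : Fin (Adv.TT N) =>
            ((Adv.pvec d, Adv.qd N s.val), Adv.ansF d N β s.val)).take t.val)
          (Adv.pvec d, Adv.qd N t.val) ≠ Adv.ansF d N β t.val) = Finset.univ := by
      apply Finset.filter_eq_self.mpr
      intro t _
      exact hall t
    rw [hfilter]
    rw [Finset.card_univ, Fintype.card_fin]
    have h1 : N ≤ 4 * Adv.TT N := by
      unfold Adv.TT
      omega
    have h2 : (N:ℝ) ≤ 4 * (Adv.TT N : ℝ) := by exact_mod_cast h1
    linarith
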